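/- For the reflection group B_n acting on ℝ^n by permutations and sign changes of coordinates, with basic invariants p_a(x) = s_a(x_1²,...,x_n²) (the a-th elementary symmetric polynomial evaluated at the squared coordinates) for a = 1,...,n, one has ∇p_a(x)·∇p_b(x) = Σ_{i=max(0,a+b−n−1)}^{min(a,b)−1} 4·(a+b−1−2i)·p_i(x)·p_{a+b−1−i}(x) for all a,b = 1,...,n and all x ∈ ℝ^n, with the convention p_0(x) = 1. -/

import Mathlib

open MvPolynomial Finset

/-- The basic invariants of the reflection group `Bₙ`:
`p a = sₐ(x₁², …, xₙ²)`, the `a`-th elementary symmetric polynomial evaluated at the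
squared coordinates.  Note `BnInvariant n 0 = 1` and `BnInvariant n c = 0` for `c > n`. -/
noncomputable def BnInvariant (n c : ℕ) : MvPolynomial (Fin n) ℝ :=
  bind₁ (fun i : Fin n => (X i : MvPolynomial (Fin n) ℝ) ^ 2) (esymm (Fin n) ℝ c)

noncomputable def EE {n : ℕ} (x : Fin n → ℝ) (c : ℕ) : ℝ :=
  ∑ t ∈ powersetCard c (univ : Finset (Fin n)), ∏ i ∈ t, x i ^ 2

noncomputable def DD {n : ℕ} (x : Fin n → ℝ) (j : Fin n) (c : ℕ) : ℝ :=
  ∑ t ∈ powersetCard c ((univ : Finset (Fin n)).erase j), ∏ i ∈ t, x i ^ 2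

lemma EE_zero {n : ℕ} (x : Fin n → ℝ) : EE x 0 = 1 := by simp [EE]

lemma DD_zero {n : ℕ} (x : Fin n → ℝ) (j : Fin n) : DD x j 0 = 1 := by simp [DD]

lemma EE_eq_zero {n : ℕ} (x : Fin n → ℝ) {c : ℕ} (h : n < c) : EE x c = 0 := by
  rw [EE, powersetCard_eq_empty.2 (by simpa using h), sum_empty]

lemma sum_split {n : ℕ} (j : Fin n) (c : ℕ) (f : Finset (Fin n) → ℝ) :
    ∑ t ∈ powersetCard (c + 1) (univ : Finset (Fin n)), f t
      = (∑ t ∈ powersetCard (c + 1) ((univ : Finset (Fin n)).erase j), f t)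
        + ∑ t ∈ powersetCard c ((univ : Finset (Fin n)).erase j), f (insert j t) := by
  conv_lhs => rw [← insert_erase (mem_univ j),
    powersetCard_succ_insert (notMem_erase j univ)]
  rw [sum_union, sum_image]
  · intro t ht t' ht' h
    have hj : j ∉ t := fun h' =>
      (notMem_erase j univ) ((mem_powersetCard.1 ht).1 h')
    have hj' : j ∉ t' := fun h' =>
      (notMem_erase j univ) ((mem_powersetCard.1 ht').1 h')
    rw [← erase_insert hj, h, erase_insert hj']
  · rw [disjoint_left]
    rintro t ht htim
    obtain ⟨t', ht', rfl⟩ := mem_image.1 htim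
    exact (notMem_erase j univ) ((mem_powersetCard.1 ht).1 (mem_insert_self j t'))

lemma EE_rec {n : ℕ} (x : Fin n → ℝ) (j : Fin n) (c : ℕ) :
    EE x (c + 1) = DD x j (c + 1) + x j ^ 2 * DD x j c := by
  rw [EE, sum_split j c, DD, DD, mul_sum]
  congr 1
  refine sum_congr rfl fun t ht => ?_
  have hj : j ∉ t := fun h' => (notMem_erase j univ) ((mem_powersetCard.1 ht).1 h')
  rw [prod_insert hj]

lemma sum_DD {n : ℕ} (x : Fin n → ℝ) (c : ℕ) :
    ∑ j, DD x j c = ((n : ℝ) - c) * EE x c := by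
  classical
  have h1 : ∀ j : Fin n, powersetCard c ((univ : Finset (Fin n)).erase j)
      = (powersetCard c (univ : Finset (Fin n))).filter (fun t => j ∉ t) := by
    intro j
    ext t
    simp only [mem_powersetCard, mem_filter, subset_erase, subset_univ, true_and]
    tauto
  simp_rw [DD, h1, sum_filter]
  rw [sum_comm, EE, mul_sum]
  refine sum_congr rfl fun t ht => ?_
  have hc : t.card = c := (mem_powersetCard.1 ht).2
  have hcn : c ≤ n := by
    simpa [hc] using card_le_card (mem_powersetCard.1 ht).1
  rw [← sum_filter]
  have hfil : (univ : Finset (Fin n)).filter (fun j => j ∉ t) = tᶜ := by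
    ext j; simp [Finset.mem_compl]
  rw [hfil, sum_const, card_compl, Fintype.card_fin, hc, nsmul_eq_mul,
    Nat.cast_sub hcn]

lemma sum_sq_DD {n : ℕ} (x : Fin n → ℝ) (c : ℕ) :
    ∑ j, x j ^ 2 * DD x j c = ((c : ℝ) + 1) * EE x (c + 1) := by
  have h : ∀ j, x j ^ 2 * DD x j c = EE x (c + 1) - DD x j (c + 1) := by
    intro j
    rw [EE_rec x j c]; ring
  simp_rw [h]
  rw [sum_sub_distrib, sum_const, sum_DD, card_univ, Fintype.card_fin, nsmul_eq_mul]
  push_cast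
  ring

lemma step {n : ℕ} (x : Fin n → ℝ) (p q : ℕ) :
    ∑ j, x j ^ 2 * DD x j p * DD x j (q + 1)
      = (∑ j, x j ^ 2 * DD x j (p + 1) * DD x j q)
        + ((p : ℝ) - q) * EE x (p + 1) * EE x (q + 1) := by
  have key : ∀ j, x j ^ 2 * DD x j p * DD x j (q + 1)
      - x j ^ 2 * DD x j (p + 1) * DD x j q
      = EE x (p + 1) * DD x j (q + 1) - DD x j (p + 1) * EE x (q + 1) := by
    intro j
    linear_combination DD x j (p + 1) * (EE_rec x j q) - DD x j (q + 1) * (EE_rec x j p)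
  have hsum : ∑ j, (x j ^ 2 * DD x j p * DD x j (q + 1)
      - x j ^ 2 * DD x j (p + 1) * DD x j q)
      = ((p : ℝ) - q) * EE x (p + 1) * EE x (q + 1) := by
    simp_rw [key]
    rw [sum_sub_distrib, ← mul_sum, ← sum_mul, sum_DD, sum_DD]
    push_cast
    ring
  rw [sum_sub_distrib] at hsum
  linarith

lemma main_identity {n : ℕ} (x : Fin n → ℝ) :
    ∀ q p : ℕ, ∑ j, x j ^ 2 * DD x j p * DD x j q
      = ∑ i ∈ range (q + 1),
          ((p : ℝ) + q + 1 - 2 * i) * EE x i * EE x (p + q + 1 - i) := by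
  intro q
  induction q with
  | zero =>
    intro p
    simp only [DD_zero, mul_one]
    rw [sum_sq_DD]
    rw [show (0:ℕ) + 1 = 1 from rfl, sum_range_one]
    norm_num [EE_zero]
  | succ q ih =>
    intro p
    rw [step x p q, ih (p + 1)]
    conv_rhs => rw [sum_range_succ]
    congr 1
    · refine sum_congr rfl fun i hi => ?_
      have h1 : p + 1 + q + 1 - i = p + (q + 1) + 1 - i := by omega
      rw [h1]
      push_cast
      ring
    · have h2 : p + (q + 1) + 1 - (q + 1) = p + 1 := by omega
      rw [h2]
      push_cast
      ring

lemma final_conv {n : ℕ} (x : Fin n → ℝ) (p q : ℕ) (hp : p + 1 ≤ n) (hq : q + 1 ≤ n) :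
    4 * ∑ i ∈ range (q + 1), ((p : ℝ) + q + 1 - 2 * i) * EE x i * EE x (p + q + 1 - i)
      = ∑ i ∈ Icc (p + q + 1 - n) (min p q),
          ((4 * (p + q + 1 - 2 * i) : ℕ) : ℝ) * EE x i * EE x (p + q + 1 - i) := by
  rw [mul_sum]
  have h2 : min p q + 1 ≤ q + 1 := by omega
  rw [range_eq_Ico, ← Ico_union_Ico_eq_Ico (Nat.zero_le (min p q + 1)) h2,
    sum_union (Ico_disjoint_Ico_consecutive _ _ _)]
  have hz : ∑ i ∈ Ico (min p q + 1) (q + 1),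
      4 * (((p : ℝ) + q + 1 - 2 * i) * EE x i * EE x (p + q + 1 - i)) = 0 := by
    refine sum_involution (fun i _ => p + q + 1 - i) ?_ ?_ ?_ ?_
    · intro i hi
      simp only [mem_Ico] at hi
      have e1 : p + q + 1 - (p + q + 1 - i) = i := by omega
      rw [e1, Nat.cast_sub (show i ≤ p + q + 1 by omega)]
      push_cast
      ring
    · intro i hi hf heq
      apply hf
      simp only [mem_Ico] at hi
      have heq' : p + q + 1 - i = i := heq
      have e2 : 2 * i = p + q + 1 := by omega
      have e3 : (p : ℝ) + q + 1 - 2 * i = 0 := by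
        rw [show ((2 : ℝ) * i) = ((2 * i : ℕ) : ℝ) by push_cast; ring, e2]
        push_cast
        ring
      rw [e3]
      ring
    · intro i hi
      simp only [mem_Ico] at hi ⊢
      omega
    · intro i hi
      simp only [mem_Ico] at hi
      show p + q + 1 - (p + q + 1 - i) = i
      omega
  rw [hz, add_zero]
  have h1 : p + q + 1 - n ≤ min p q + 1 := by omega
  rw [← Ico_union_Ico_eq_Ico (Nat.zero_le (p + q + 1 - n)) h1,
    sum_union (Ico_disjoint_Ico_consecutive _ _ _)]
  have hz2 : ∑ i ∈ Ico 0 (p + q + 1 - n),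
      4 * (((p : ℝ) + q + 1 - 2 * i) * EE x i * EE x (p + q + 1 - i)) = 0 := by
    refine sum_eq_zero fun i hi => ?_
    rw [mem_Ico] at hi
    rw [EE_eq_zero x (show n < p + q + 1 - i by omega), mul_zero, mul_zero]
  rw [hz2, zero_add, ← Finset.Ico_add_one_right_eq_Icc]
  refine sum_congr rfl fun i hi => ?_
  rw [mem_Ico] at hi
  have h2i : 2 * i ≤ p + q + 1 := by omega
  rw [Nat.cast_mul, Nat.cast_sub h2i]
  push_cast
  ring

lemma BnInvariant_eq (n c : ℕ) :
    BnInvariant n c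
      = ∑ t ∈ powersetCard c (univ : Finset (Fin n)),
          ∏ i ∈ t, (X i : MvPolynomial (Fin n) ℝ) ^ 2 := by
  rw [BnInvariant, esymm, map_sum]
  refine sum_congr rfl fun t _ => ?_
  rw [map_prod]
  simp [bind₁_X_right]

lemma eval_BnInvariant {n : ℕ} (x : Fin n → ℝ) (c : ℕ) :
    eval x (BnInvariant n c) = EE x c := by
  rw [BnInvariant_eq, map_sum, EE]
  refine sum_congr rfl fun t _ => ?_
  rw [eval_prod]
  simp

lemma pderiv_prod_sq {n : ℕ} (j : Fin n) (t : Finset (Fin n)) :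
    pderiv j (∏ i ∈ t, (X i : MvPolynomial (Fin n) ℝ) ^ 2)
      = if j ∈ t then
          2 * X j * ∏ i ∈ t.erase j, (X i : MvPolynomial (Fin n) ℝ) ^ 2
        else 0 := by
  classical
  induction t using Finset.induction with
  | empty => simp
  | @insert a t ha ih =>
    rw [prod_insert ha, pderiv_mul, ih]
    by_cases hja : j = a
    · subst hja
      have hj : j ∉ t := ha
      simp only [hj, if_false, if_pos (mem_insert_self j t), erase_insert hj, mul_zero,
        add_zero]
      rw [pderiv_pow, pderiv_X_self]
      push_cast
      ring
    · have h1 : pderiv j ((X a : MvPolynomial (Fin n) ℝ) ^ 2) = 0 := by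
        rw [pderiv_pow, pderiv_X_of_ne (Ne.symm hja)]
        ring
      rw [h1, zero_mul, zero_add]
      by_cases hjt : j ∈ t
      · rw [if_pos hjt, if_pos (mem_insert_of_mem hjt)]
        have e1 : (insert a t).erase j = insert a (t.erase j) := by
          rw [erase_insert_of_ne (fun h => hja h.symm)]
        rw [e1, prod_insert (fun h => ha (mem_of_mem_erase h))]
        ring
      · rw [if_neg hjt, mul_zero, if_neg (by simp [hjt, hja])]

lemma eval_pderiv_Bn {n : ℕ} (x : Fin n → ℝ) (j : Fin n) (c : ℕ) :
    eval x (pderiv j (BnInvariant n (c + 1))) = 2 * x j * DD x j c := by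
  rw [BnInvariant_eq, map_sum, map_sum,
    sum_split j c (fun t => eval x (pderiv j (∏ i ∈ t, (X i : MvPolynomial (Fin n) ℝ) ^ 2)))]
  have h0 : ∑ t ∈ powersetCard (c + 1) ((univ : Finset (Fin n)).erase j),
      eval x (pderiv j (∏ i ∈ t, (X i : MvPolynomial (Fin n) ℝ) ^ 2)) = 0 := by
    refine sum_eq_zero fun t ht => ?_
    have hj : j ∉ t := fun h' => (notMem_erase j univ) ((mem_powersetCard.1 ht).1 h')
    rw [pderiv_prod_sq, if_neg hj, map_zero]
  rw [h0, zero_add, DD, mul_sum]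
  refine sum_congr rfl fun t ht => ?_
  have hj : j ∉ t := fun h' => (notMem_erase j univ) ((mem_powersetCard.1 ht).1 h')
  rw [pderiv_prod_sq, if_pos (mem_insert_self j t), erase_insert hj]
  simp [mul_assoc]

/-- Generating formula for the `P`-matrix entries of the reflection group `Bₙ`. -/
theorem Bn_P_matrix_generating_formula (n a b : ℕ) (ha : 1 ≤ a) (han : a ≤ n)
    (hb : 1 ≤ b) (hbn : b ≤ n) (x : Fin n → ℝ) :
    (∑ j : Fin n,
        eval x (pderiv j (BnInvariant n a)) * eval x (pderiv j (BnInvariant n b)))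
      = ∑ i ∈ Finset.Icc (a + b - n - 1) (min a b - 1),
          ((4 * (a + b - 1 - 2 * i) : ℕ) : ℝ) * eval x (BnInvariant n i) *
            eval x (BnInvariant n (a + b - 1 - i)) := by
  obtain ⟨p, rfl⟩ : ∃ p, a = p + 1 := ⟨a - 1, by omega⟩
  obtain ⟨q, rfl⟩ : ∃ q, b = q + 1 := ⟨b - 1, by omega⟩
  have hLHS : ∑ j : Fin n,
      eval x (pderiv j (BnInvariant n (p + 1))) * eval x (pderiv j (BnInvariant n (q + 1)))
      = 4 * ∑ j, x j ^ 2 * DD x j p * DD x j q := by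
    rw [mul_sum]
    refine sum_congr rfl fun j _ => ?_
    rw [eval_pderiv_Bn, eval_pderiv_Bn]
    ring
  rw [hLHS, main_identity x q p, final_conv x p q han hbn]
  have e1 : p + 1 + (q + 1) - n - 1 = p + q + 1 - n := by omega
  have e2 : min (p + 1) (q + 1) - 1 = min p q := by omega
  have e3 : p + 1 + (q + 1) - 1 = p + q + 1 := by omega
  rw [e1, e2, e3]
  refine sum_congr rfl fun i hi => ?_
  rw [eval_BnInvariant, eval_BnInvariant]
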